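/- Let c be a codeword of the Varshamov–Tenengolts code VT(n) and let y be a binary string of length n obtained from c by a single deletion followed by a single insertion. Then either y = c, or the checksum of y is not divisible by n+1 (i.e., y ∉ VT(n), so the corruption is detectable). -/

import Mathlib

/-- The checksum of a binary string `c = (c_1, …, c_n)` is `Σ_{i=1}^n i·c_i`. -/
def checksum (c : List Bool) : ℕ :=
  ∑ i ∈ Finset.range c.length, (i + 1) * (c.getD i false).toNat

/-- The Varshamov–Tenengolts code `VT(n)`. -/
def VT (n : ℕ) : Set (List Bool) :=
  {c | c.length = n ∧ (n + 1) ∣ checksum c}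

/-- `del1 x`: the set of strings obtainable from `x` by deleting one bit. -/
def del1 (x : List Bool) : Set (List Bool) :=
  {w | ∃ p < x.length, w = x.take p ++ x.drop (p + 1)}

/-- `ins1 x`: the set of strings obtainable from `x` by inserting one bit. -/
def ins1 (x : List Bool) : Set (List Bool) :=
  {y | ∃ p ≤ x.length, ∃ b : Bool, y = x.take p ++ b :: x.drop p}

lemma sum_toNat_eq_count (t : List Bool) :
    ∑ i ∈ Finset.range t.length, (t.getD i false).toNat = t.count true := by
  induction t with
  | nil => simp
  | cons h t ih =>
    rw [List.length_cons, Finset.sum_range_succ']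
    simp only [List.getD_cons_succ, List.getD_cons_zero, ih, List.count_cons]
    cases h <;> simp [Nat.add_comm]

lemma checksum_cons (b : Bool) (t : List Bool) :
    checksum (b :: t) = b.toNat + checksum t + t.count true := by
  unfold checksum
  rw [List.length_cons, Finset.sum_range_succ']
  simp only [List.getD_cons_succ, List.getD_cons_zero]
  have : ∀ i ∈ Finset.range t.length, (i+1+1) * (t.getD i false).toNat
      = (i+1) * (t.getD i false).toNat + (t.getD i false).toNat := by
    intro i _; ring
  rw [Finset.sum_congr rfl this, Finset.sum_add_distrib, sum_toNat_eq_count t]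
  ring

lemma checksum_insert (u v : List Bool) (b : Bool) :
    checksum (u ++ b :: v) = checksum (u ++ v) + (u.length + 1) * b.toNat + v.count true := by
  induction u with
  | nil => cases b <;> simp [checksum_cons, Nat.add_comm]
  | cons h u ih =>
    simp only [List.cons_append, checksum_cons, ih, List.count_append, List.count_cons,
      List.length_cons]
    cases b <;> simp <;> ring

lemma replicate_shift (k : ℕ) (b : Bool) (t : List Bool) :
    List.replicate k b ++ b :: t = b :: (List.replicate k b ++ t) := by
  induction k with
  | zero => simp
  | succ k ih => simp [List.replicate_succ, ih]

lemma insert_eq_of_eq (w : List Bool) (p q : ℕ) (a b : Bool)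
    (hpq : p ≤ q) (hq : q ≤ w.length)
    (h : (q+1)*b.toNat + (w.drop q).count true = (p+1)*a.toNat + (w.drop p).count true) :
    w.take q ++ b :: w.drop q = w.take p ++ a :: w.drop p := by
  set s := (w.drop p).take (q - p) with hs
  have hdd : (w.drop p).drop (q - p) = w.drop q := by
    rw [List.drop_drop]; congr 1; omega
  have hsplit : w.drop p = s ++ w.drop q := by
    rw [← hdd, hs, List.take_append_drop]
  have hslen : s.length = q - p := by
    rw [hs, List.length_take, List.length_drop]; omega
  have hcount : (w.drop p).count true = s.count true + (w.drop q).count true := by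
    rw [hsplit, List.count_append]
  have hcle : s.count true ≤ q - p := hslen ▸ (List.count_le_length (a := true) (l := s))
  have hab : a = b ∧ s = List.replicate (q - p) b := by
    cases a <;> cases b <;>
      simp only [Bool.toNat_true, Bool.toNat_false, mul_one, mul_zero, zero_add, add_zero] at h
    · refine ⟨rfl, ?_⟩
      have h0 : s.count true = 0 := by omega
      rw [List.eq_replicate_iff]
      refine ⟨hslen, fun x hx => ?_⟩
      rcases Bool.eq_false_or_eq_true x with h' | h'
      · exact absurd (h' ▸ hx) (List.count_eq_zero.mp h0)
      · exact h'
    · omega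
    · omega
    · refine ⟨rfl, ?_⟩
      have h1 : s.count true = s.length := by omega
      rw [List.eq_replicate_iff]
      exact ⟨hslen, fun x hx => (List.count_eq_length.mp h1 x hx).symm⟩
  obtain ⟨rfl, hsrep⟩ := hab
  have htake : w.take q = w.take p ++ s := by
    conv_lhs => rw [show q = p + (q - p) by omega]
    rw [List.take_add]
  rw [htake, hsplit, hsrep, List.append_assoc]
  congr 1
  exact replicate_shift _ _ _

/-- If a length-`n` string `y` is obtained from a VT(n) codeword `c` by a single
deletion followed by a single insertion, then either `y = c`, or the checksum
of `y` is not divisible by `n+1` (so the corruption is detectable). -/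
theorem vt_detect_del_ins (n : ℕ) (c y : List Bool)
    (hc : c ∈ VT n) (hy : y.length = n)
    (w : List Bool) (hwc : w ∈ del1 c) (hyw : y ∈ ins1 w) :
    y = c ∨ ¬ (n + 1) ∣ checksum y := by
  obtain ⟨hclen, hcdvd⟩ := hc
  obtain ⟨p, hp, hw⟩ := hwc
  obtain ⟨q, hq, b, hyeq⟩ := hyw
  by_cases hdy : (n + 1) ∣ checksum y
  · left
    set a := c.getD p false with ha
    have hdropc : c.drop p = a :: c.drop (p+1) := by
      rw [List.drop_eq_getElem_cons hp, ha, List.getD_eq_getElem _ _ hp]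
    have hceq : c = c.take p ++ a :: c.drop (p+1) := by
      conv_lhs => rw [← List.take_append_drop p c, hdropc]
    have hulen : (c.take p).length = p := by rw [List.length_take]; omega
    have hwlen : w.length = c.length - 1 := by
      rw [hw]; rw [List.length_append, List.length_take, List.length_drop]; omega
    have hwtp : w.take p = c.take p := by rw [hw]; exact List.take_left' hulen
    have hwdp : w.drop p = c.drop (p+1) := by rw [hw]; exact List.drop_left' hulen
    have hcsum : checksum c = checksum w + (p+1) * a.toNat + (c.drop (p+1)).count true := by
      conv_lhs => rw [hceq]
      rw [checksum_insert, hulen, ← hw]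
    have hysum : checksum y = checksum w + (q+1) * b.toNat + (w.drop q).count true := by
      conv_lhs => rw [hyeq]
      rw [checksum_insert, List.take_append_drop, List.length_take]
      congr 3
      omega
    -- bounds
    have hbb : (q+1) * b.toNat ≤ q + 1 := by cases b <;> simp
    have hba : (p+1) * a.toNat ≤ p + 1 := by cases a <;> simp
    have hcq : (w.drop q).count true ≤ w.length - q := by
      have := List.count_le_length (a := true) (l := w.drop q)
      rwa [List.length_drop] at this
    have hcp : (c.drop (p+1)).count true ≤ c.length - (p+1) := by
      have := List.count_le_length (a := true) (l := c.drop (p+1))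
      rwa [List.length_drop] at this
    -- D1 = D2
    have h1 : (n+1) ∣ checksum w + ((p+1) * a.toNat + (c.drop (p+1)).count true) := by
      rw [← Nat.add_assoc, ← hcsum]; exact hcdvd
    have h2 : (n+1) ∣ checksum w + ((q+1) * b.toNat + (w.drop q).count true) := by
      rw [← Nat.add_assoc, ← hysum]; exact hdy
    have hDeq : (q+1) * b.toNat + (w.drop q).count true
        = (p+1) * a.toNat + (c.drop (p+1)).count true := by
      have hd1 := Nat.dvd_sub h1 h2
      have hd2 := Nat.dvd_sub h2 h1
      have e1 := Nat.eq_zero_of_dvd_of_lt hd1 (by omega)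
      have e2 := Nat.eq_zero_of_dvd_of_lt hd2 (by omega)
      omega
    rw [← hwdp] at hDeq
    have hceq' : c = w.take p ++ a :: w.drop p := by rw [hwtp, hwdp]; exact hceq
    rcases le_total p q with hpq | hqp
    · rw [hyeq, hceq']
      exact insert_eq_of_eq w p q a b hpq hq hDeq
    · rw [hyeq, hceq']
      exact (insert_eq_of_eq w q p b a hqp (by omega) hDeq.symm).symm
  · right; exact hdy
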